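/- Let n be a positive integer, λ_1,…,λ_n positive reals, τ > 0. For each integer k ≥ 1 let ω_k > 0 be the unique solution of Σ_{j=1}^{n} arctan(ω/λ_j) = (2k−1)π − ωτ, and set a_k = √(Π_{j=1}^{n}(ω_k² + λ_j²)). Let m = ⌊(n+1)/2⌋. Then for every a ≥ a_m the characteristic equation (z+λ_1)(z+λ_2)⋯(z+λ_n) + a·e^{−τz} = 0 has no real roots. -/

import Mathlib

open Real Finset

private lemma arctan_pos' {x : ℝ} (hx : 0 < x) : 0 < Real.arctan x := by
  have := Real.arctan_strictMono hx
  rwa [Real.arctan_zero] at this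

private lemma arctan_lt_self' {x : ℝ} (hx : 0 < x) : Real.arctan x < x := by
  have h1 : 0 < Real.arctan x := arctan_pos' hx
  have h2 := Real.arctan_lt_pi_div_two x
  have := Real.lt_tan h1 h2
  rwa [Real.tan_arctan] at this

/-- Claim A: for positive `W, lam, t`:
`|lam - t| < √(W² + lam²) · exp((t/W)(π - arctan(W/lam)))`. -/
private lemma claimA (W lam t : ℝ) (hW : 0 < W) (hl : 0 < lam) (ht : 0 < t) :
    |lam - t| < Real.sqrt (W ^ 2 + lam ^ 2) *
      Real.exp ((t / W) * (Real.pi - Real.arctan (W / lam))) := by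
  set s := t / W with hs_def
  have hs : 0 < s := div_pos ht hW
  have hθ : Real.arctan (W / lam) < Real.pi / 2 := Real.arctan_lt_pi_div_two _
  have hE : s * (Real.pi / 2) ≤ s * (Real.pi - Real.arctan (W / lam)) := by
    apply mul_le_mul_of_nonneg_left _ hs.le
    linarith
  have hE0 : 0 ≤ s * (Real.pi - Real.arctan (W / lam)) := by
    have : 0 < Real.pi / 2 := by positivity
    nlinarith
  have hWsqrt : W ≤ Real.sqrt (W ^ 2 + lam ^ 2) := by
    have h := Real.sqrt_le_sqrt (show W ^ 2 ≤ W ^ 2 + lam ^ 2 by nlinarith)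
    rwa [Real.sqrt_sq hW.le] at h
  have hlsqrt : lam < Real.sqrt (W ^ 2 + lam ^ 2) := by
    have h := Real.sqrt_lt_sqrt (sq_nonneg lam)
      (show lam ^ 2 < W ^ 2 + lam ^ 2 by nlinarith)
    rwa [Real.sqrt_sq hl.le] at h
  have hexp1 : 1 ≤ Real.exp (s * (Real.pi - Real.arctan (W / lam))) :=
    Real.one_le_exp hE0
  have hsqrtpos : 0 < Real.sqrt (W ^ 2 + lam ^ 2) := lt_trans hl hlsqrt
  rcases le_or_gt t lam with h | h
  · have habs : |lam - t| = lam - t := abs_of_nonneg (by linarith)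
    calc |lam - t| = lam - t := habs
      _ < lam := by linarith
      _ < Real.sqrt (W ^ 2 + lam ^ 2) := hlsqrt
      _ ≤ _ := le_mul_of_one_le_right hsqrtpos.le hexp1
  · have habs : |lam - t| = t - lam := by
      rw [abs_of_neg (show lam - t < 0 by linarith)]; ring
    -- s < exp (s * π/2) since exp x ≥ 1 + x and π/2 > 1
    have hpi : 1 < Real.pi / 2 := by
      have := Real.pi_gt_three; linarith
    have hsexp : s < Real.exp (s * (Real.pi / 2)) := by
      have h1 := Real.add_one_le_exp (s * (Real.pi / 2))
      nlinarith
    have hsexp2 : s < Real.exp (s * (Real.pi - Real.arctan (W / lam))) :=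
      lt_of_lt_of_le hsexp (Real.exp_le_exp.2 hE)
    have ht_eq : t = s * W := by rw [hs_def]; field_simp
    calc |lam - t| = t - lam := habs
      _ < t := by linarith
      _ = s * W := ht_eq
      _ ≤ Real.exp (s * (Real.pi - Real.arctan (W / lam))) * W := by
          apply mul_le_mul_of_nonneg_right hsexp2.le hW.le
      _ ≤ Real.exp (s * (Real.pi - Real.arctan (W / lam))) *
            Real.sqrt (W ^ 2 + lam ^ 2) := by
          apply mul_le_mul_of_nonneg_left hWsqrt (Real.exp_nonneg _)
      _ = _ := by ring

/-- Claim B: for `0 < t < lam`, `W > 0`: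
`lam - t < √(W² + lam²) · exp(-(t/W)·arctan(W/lam))`. -/
private lemma claimB (W lam t : ℝ) (hW : 0 < W) (ht : 0 < t) (htl : t < lam) :
    lam - t < Real.sqrt (W ^ 2 + lam ^ 2) *
      Real.exp (-((t / W) * Real.arctan (W / lam))) := by
  have hl : 0 < lam := lt_trans ht htl
  set s := t / W with hs_def
  have hs : 0 < s := div_pos ht hW
  set θ := Real.arctan (W / lam) with hθ_def
  have hθpos : 0 < θ := arctan_pos' (div_pos hW hl)
  have hθle : θ < W / lam := arctan_lt_self' (div_pos hW hl)
  set x := s * θ with hx_def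
  have hxpos : 0 < x := mul_pos hs hθpos
  have hlx : lam * x < t := by
    have h1 : lam * (s * θ) < lam * (s * (W / lam)) := by
      apply mul_lt_mul_of_pos_left (mul_lt_mul_of_pos_left hθle hs) hl
    have h2 : lam * (s * (W / lam)) = t := by
      rw [hs_def]; field_simp
    rw [hx_def]
    calc lam * (s * θ) < lam * (s * (W / lam)) := h1
      _ = t := h2
  have hx1 : x < 1 := by
    have : lam * x < lam * 1 := by rw [mul_one]; linarith
    exact lt_of_mul_lt_mul_left this hl.le
  have h1x : 0 < 1 - x := by linarith
  -- exp x * (1 - x) ≤ 1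
  have hexpkey : Real.exp x * (1 - x) ≤ 1 := by
    have h1 : 1 - x ≤ Real.exp (-x) := by
      have := Real.add_one_le_exp (-x); linarith
    have h2 : Real.exp x * (1 - x) ≤ Real.exp x * Real.exp (-x) :=
      mul_le_mul_of_nonneg_left h1 (Real.exp_nonneg _)
    rwa [← Real.exp_add, add_neg_cancel, Real.exp_zero] at h2
  have hkey : (lam - t) * Real.exp x ≤ lam := by
    rw [← mul_le_mul_iff_of_pos_right h1x]
    have hlt : 0 < lam - t := by linarith
    calc (lam - t) * Real.exp x * (1 - x)
        = (lam - t) * (Real.exp x * (1 - x)) := by ring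
      _ ≤ (lam - t) * 1 := mul_le_mul_of_nonneg_left hexpkey hlt.le
      _ = lam - t := mul_one _
      _ ≤ lam * (1 - x) := by nlinarith
  have hlsqrt : lam < Real.sqrt (W ^ 2 + lam ^ 2) := by
    have h := Real.sqrt_lt_sqrt (sq_nonneg lam)
      (show lam ^ 2 < W ^ 2 + lam ^ 2 by nlinarith)
    rwa [Real.sqrt_sq hl.le] at h
  have hexppos : 0 < Real.exp (-x) := Real.exp_pos _
  have : (lam - t) = (lam - t) * Real.exp x * Real.exp (-x) := by
    rw [mul_assoc, ← Real.exp_add, add_neg_cancel, Real.exp_zero, mul_one]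
  rw [this]
  apply mul_lt_mul_of_pos_right _ hexppos
  exact lt_of_le_of_lt hkey hlsqrt

/-- Corollary 1: with `ω_k` the unique positive solution of
`Σⱼ arctan(ω/λⱼ) = (2k-1)π - ωτ`, `a_k = √(Πⱼ(ω_k² + λⱼ²))` and `m = ⌊(n+1)/2⌋`,
for every `a ≥ a_m` the characteristic equation `(z+λ₁)⋯(z+λₙ) + a e^{-τz} = 0`
has no real roots. -/
theorem no_real_roots_above_a_m
    (n : ℕ) (hn : 0 < n) (lam : Fin n → ℝ) (hlam : ∀ j, 0 < lam j)
    (τ : ℝ) (hτ : 0 < τ)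
    (ω : ℕ → ℝ)
    (hω : ∀ k : ℕ, 1 ≤ k → 0 < ω k ∧
      (∑ j, Real.arctan (ω k / lam j)) = (2 * (k : ℝ) - 1) * Real.pi - ω k * τ)
    (hωuniq : ∀ k : ℕ, 1 ≤ k → ∀ w : ℝ, 0 < w →
      (∑ j, Real.arctan (w / lam j)) = (2 * (k : ℝ) - 1) * Real.pi - w * τ → w = ω k)
    (A : ℕ → ℝ)
    (hA : ∀ k : ℕ, A k = Real.sqrt (∏ j, (ω k ^ 2 + lam j ^ 2))) :
    ∀ a : ℝ, A ((n + 1) / 2) ≤ a → ∀ z : ℝ,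
      (∏ j, (z + lam j)) + a * Real.exp (-τ * z) ≠ 0 := by
  intro a ha z H
  set m := (n + 1) / 2 with hm_def
  have hm1 : 1 ≤ m := by omega
  obtain ⟨hWpos, hphase⟩ := hω m hm1
  set W := ω m with hW_def
  -- A m > 0
  have hprodpos : 0 < ∏ j, (W ^ 2 + lam j ^ 2) :=
    Finset.prod_pos fun j _ => by have := hlam j; positivity
  have hApos : 0 < A m := by
    rw [hA m]; exact Real.sqrt_pos.2 hprodpos
  have hapos : 0 < a := lt_of_lt_of_le hApos ha
  have haepos : 0 < a * Real.exp (-τ * z) := mul_pos hapos (Real.exp_pos _)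
  have hP : (∏ j, (z + lam j)) = -(a * Real.exp (-τ * z)) := by linarith
  have hPneg : (∏ j, (z + lam j)) < 0 := by rw [hP]; linarith
  -- z < 0
  have hz : z < 0 := by
    by_contra h
    push_neg at h
    have : 0 < ∏ j, (z + lam j) :=
      Finset.prod_pos fun j _ => by have := hlam j; linarith
    linarith
  set t := -z with ht_def
  have ht : 0 < t := by simp [ht_def]; linarith
  have hzl : ∀ j, z + lam j = lam j - t := fun j => by rw [ht_def]; ring
  have hPt : (∏ j, (lam j - t)) < 0 := by
    rw [show (∏ j, (lam j - t)) = ∏ j, (z + lam j) from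
      Finset.prod_congr rfl fun j _ => (hzl j).symm]
    exact hPneg
  have hfac : ∀ j : Fin n, lam j - t ≠ 0 := by
    intro j
    exact Finset.prod_ne_zero_iff.1 (ne_of_lt hPt) j (Finset.mem_univ j)
  -- |prod| equality
  have hexz : Real.exp (-τ * z) = Real.exp (τ * t) := by
    rw [ht_def]; ring_nf
  have habs : (∏ j, |lam j - t|) = a * Real.exp (τ * t) := by
    rw [← Finset.abs_prod]
    rw [show (∏ j, (lam j - t)) = ∏ j, (z + lam j) from
      Finset.prod_congr rfl fun j _ => (hzl j).symm, hP, abs_neg,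
      abs_of_pos haepos, hexz]
  -- notation
  set θ : Fin n → ℝ := fun j => Real.arctan (W / lam j) with hθ_def
  have hθpos : ∀ j, 0 < θ j := fun j => arctan_pos' (div_pos hWpos (hlam j))
  have hSθ : (∑ j, θ j) = (2 * (m : ℝ) - 1) * Real.pi - W * τ := hphase
  have hWne : W ≠ 0 := ne_of_gt hWpos
  have hne : (Finset.univ : Finset (Fin n)).Nonempty := by
    have : Nonempty (Fin n) := ⟨⟨0, hn⟩⟩
    exact Finset.univ_nonempty
  -- sqrt of product = product of sqrt
  have hsqrtprod : A m = ∏ j, Real.sqrt (W ^ 2 + lam j ^ 2) := by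
    rw [hA m]
    have h1 : (∏ j, Real.sqrt (W ^ 2 + lam j ^ 2)) ^ 2
        = ∏ j, (W ^ 2 + lam j ^ 2) := by
      rw [← Finset.prod_pow]
      exact Finset.prod_congr rfl fun j _ =>
        Real.sq_sqrt (by have := hlam j; positivity)
    rw [← h1, Real.sqrt_sq (Finset.prod_nonneg fun j _ => Real.sqrt_nonneg _)]
  -- The key strict inequality: ∏ |lam j - t| < A m * exp (τ * t)
  have key : (∏ j, |lam j - t|) < A m * Real.exp (τ * t) := by
    rcases Nat.even_or_odd n with hpar | hpar
    · -- n even : pick j* with t < lam j*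
      obtain ⟨j₀, hj₀⟩ : ∃ j : Fin n, t < lam j := by
        by_contra h
        push_neg at h
        have hall : ∀ j : Fin n, lam j - t < 0 := by
          intro j
          rcases lt_or_eq_of_le (h j) with h' | h'
          · linarith
          · exact absurd (by linarith : lam j - t = 0) (hfac j)
        have h1 : (∏ j, (lam j - t)) = (-1 : ℝ) ^ n * ∏ j, (t - lam j) := by
          calc (∏ j, (lam j - t)) = ∏ j, ((-1) * (t - lam j)) :=
                Finset.prod_congr rfl fun j _ => by ring
            _ = (∏ _j : Fin n, (-1 : ℝ)) * ∏ j, (t - lam j) :=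
                Finset.prod_mul_distrib
            _ = (-1 : ℝ) ^ n * ∏ j, (t - lam j) := by
                rw [Finset.prod_const, Finset.card_univ, Fintype.card_fin]
        have h2 : (0 : ℝ) < ∏ j, (t - lam j) :=
          Finset.prod_pos fun j _ => by have := hall j; linarith
        rw [h1, hpar.neg_one_pow, one_mul] at hPt
        linarith
      have h2m : 2 * m = n := by
        obtain ⟨r, hr⟩ := hpar; omega
      have hcast : (2 * (m : ℝ) - 1) = (n : ℝ) - 1 := by
        have h : (2 : ℝ) * (m : ℝ) = (n : ℝ) := by exact_mod_cast h2m
        linarith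
      set c : Fin n → ℝ := fun j => if j = j₀ then -θ j else Real.pi - θ j
        with hc_def
      have hsum : (∑ j, c j) = W * τ := by
        have h1 : ∀ j, c j = (Real.pi - θ j) + (if j = j₀ then -Real.pi else 0) := by
          intro j; rw [hc_def]; by_cases h : j = j₀ <;> simp [h] <;> ring
        rw [Finset.sum_congr rfl fun j _ => h1 j, Finset.sum_add_distrib,
          Finset.sum_ite_eq' Finset.univ j₀ (fun _ => -Real.pi),
          if_pos (Finset.mem_univ j₀), Finset.sum_sub_distrib,
          Finset.sum_const, Finset.card_univ, Fintype.card_fin, hSθ, hcast]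
        ring
      have hfactor : ∀ j : Fin n, |lam j - t| <
          Real.sqrt (W ^ 2 + lam j ^ 2) * Real.exp ((t / W) * c j) := by
        intro j
        by_cases h : j = j₀
        · rw [h]
          have hcj : c j₀ = -θ j₀ := by simp [hc_def]
          rw [hcj, show t / W * -θ j₀ = -(t / W * θ j₀) from by ring,
            abs_of_pos (show (0:ℝ) < lam j₀ - t by linarith [hj₀])]
          exact claimB W (lam j₀) t hWpos ht hj₀
        · have hcj : c j = Real.pi - θ j := by simp [hc_def, h]
          rw [hcj]
          exact claimA W (lam j) t hWpos (hlam j) ht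
      calc (∏ j, |lam j - t|)
          < ∏ j, Real.sqrt (W ^ 2 + lam j ^ 2) * Real.exp ((t / W) * c j) :=
            Finset.prod_lt_prod_of_nonempty
              (fun j _ => abs_pos.2 (hfac j)) (fun j _ => hfactor j) hne
        _ = (∏ j, Real.sqrt (W ^ 2 + lam j ^ 2)) *
              Real.exp (∑ j, (t / W) * c j) := by
            rw [Finset.prod_mul_distrib, Real.exp_sum]
        _ = A m * Real.exp (τ * t) := by
            rw [← hsqrtprod, ← Finset.mul_sum, hsum]
            congr 1
            rw [show (t / W) * (W * τ) = τ * t by field_simp]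
    · -- n odd
      have h2m : 2 * m = n + 1 := by
        obtain ⟨r, hr⟩ := hpar; omega
      have hcast : (2 * (m : ℝ) - 1) = (n : ℝ) := by
        have h : (2 : ℝ) * (m : ℝ) = (n : ℝ) + 1 := by exact_mod_cast h2m
        linarith
      have hsum : (∑ j, (Real.pi - θ j)) = W * τ := by
        rw [Finset.sum_sub_distrib, Finset.sum_const, Finset.card_univ,
          Fintype.card_fin, hSθ, hcast]
        ring
      calc (∏ j, |lam j - t|)
          < ∏ j, Real.sqrt (W ^ 2 + lam j ^ 2) *
              Real.exp ((t / W) * (Real.pi - θ j)) :=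
            Finset.prod_lt_prod_of_nonempty
              (fun j _ => abs_pos.2 (hfac j))
              (fun j _ => claimA W (lam j) t hWpos (hlam j) ht) hne
        _ = (∏ j, Real.sqrt (W ^ 2 + lam j ^ 2)) *
              Real.exp (∑ j, (t / W) * (Real.pi - θ j)) := by
            rw [Finset.prod_mul_distrib, Real.exp_sum]
        _ = A m * Real.exp (τ * t) := by
            rw [← hsqrtprod, ← Finset.mul_sum, hsum]
            congr 1
            rw [show (t / W) * (W * τ) = τ * t by field_simp]
  -- contradiction
  have hfin : a * Real.exp (τ * t) < A m * Real.exp (τ * t) := habs ▸ key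
  have : a < A m := lt_of_mul_lt_mul_right hfin (Real.exp_nonneg _)
  linarith
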